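/- Let ω = exp(2πi/3) and let f be the Hessian arrangement of 12 lines in ℂ³: the forms g₁ = x₁, g₂ = x₂, g₃ = x₃ together with h(i,j) = x₁ + ω^i x₂ + ω^j x₃ for (i,j) ∈ ZMod 3 × ZMod 3. Let S be the set of λ (in the 12-dimensional coordinate space of the arrangement) satisfying: the sum of all 12 coordinates of λ is 0, and for every c ∈ ZMod 3: λ(g₁) + Σ_{(i,j) : j−i = c} λ(h(i,j)) = 0, λ(g₂) + Σ_{(i,j) : j = c} λ(h(i,j)) = 0, and λ(g₃) + Σ_{(i,j) : i = c} λ(h(i,j)) = 0 (these are the equations associated to the nine multiplicity-4 flats of the arrangement). Then S is a ℂ-linear subspace of dimension 3 and S ⊆ R1_1(f). (In particular the first cohomology support locus of the Orlik–Solomon algebra of the Hessian arrangement has a non-local component of dimension three.) -/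

import Mathlib

/-!
The first cohomology support locus of the Orlik–Solomon algebra of the monomial
arrangement `𝒜(r,r,3)` (for `r ≥ 4`, `3 ∤ r`): it is the union of the three
"local" components `T_{ij}` coming from the points of multiplicity `r`, and of
the two-dimensional components `S(q,a,b)` indexed by positive divisors `q ∣ r`
and `a, b ∈ ZMod r`.

The index set of the arrangement is `Fin 3 × ZMod r`, where the first
coordinate `0, 1, 2` corresponds to the pair `(1,2), (1,3), (2,3)` respectively.
-/

noncomputable section

open Module

/-- Degree-2 part of the Orlik–Solomon ideal (span over pairwise distinct triples
with linearly dependent forms; this agrees with the span over ordered triples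
`i < j < k` since the spanning element is alternating in `(i,j,k)`). -/
def osI2 {I : Type*} [DecidableEq I] {ℓ : ℕ}
    (f : I → ((Fin ℓ → ℂ) →ₗ[ℂ] ℂ)) :
    Submodule ℂ (ExteriorAlgebra ℂ (I → ℂ)) :=
  Submodule.span ℂ
    { x | ∃ i j k : I, i ≠ j ∧ i ≠ k ∧ j ≠ k ∧
        ¬ LinearIndependent ℂ ![f i, f j, f k] ∧
        x = ExteriorAlgebra.ι ℂ (Pi.single j 1 : I → ℂ) *
              ExteriorAlgebra.ι ℂ (Pi.single k 1 : I → ℂ)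
          - ExteriorAlgebra.ι ℂ (Pi.single i 1 : I → ℂ) *
              ExteriorAlgebra.ι ℂ (Pi.single k 1 : I → ℂ)
          + ExteriorAlgebra.ι ℂ (Pi.single i 1 : I → ℂ) *
              ExteriorAlgebra.ι ℂ (Pi.single j 1 : I → ℂ) }

/-- `K(λ) = {η | ω(λ) ∧ ω(η) ∈ I₂(f)}`. -/
def osK {I : Type*} [DecidableEq I] {ℓ : ℕ}
    (f : I → ((Fin ℓ → ℂ) →ₗ[ℂ] ℂ)) (lam : I → ℂ) :
    Submodule ℂ (I → ℂ) :=
  (osI2 f).comap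
    ((LinearMap.mulLeft ℂ (ExteriorAlgebra.ι ℂ lam)).comp (ExteriorAlgebra.ι ℂ))

/-- The `k`-th cohomology support locus of the Orlik–Solomon algebra of `f`. -/
def osR1 {I : Type*} [Fintype I] [DecidableEq I] {ℓ : ℕ}
    (f : I → ((Fin ℓ → ℂ) →ₗ[ℂ] ℂ)) (k : ℕ) : Set (I → ℂ) :=
  { lam | letI := Classical.dec (lam = 0);
      k ≤ finrank ℂ (osK f lam) - (if lam = 0 then 0 else 1) }

/-! ### Auxiliary material for the Hessian arrangement -/

abbrev HessI := Fin 3 ⊕ ZMod 3 × ZMod 3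

lemma hess_zmod3_cases : ∀ i : ZMod 3, i = 0 ∨ i = 1 ∨ i = 2 := by decide
lemma hess_fin3_cases : ∀ i : Fin 3, i = 0 ∨ i = 1 ∨ i = 2 := by decide

def hsg (u : HessI) : HessI → ℂ := Pi.single u 1
def hE (u : HessI) : ExteriorAlgebra ℂ (HessI → ℂ) := ExteriorAlgebra.ι ℂ (hsg u)
def GEN (x z y : HessI) : ExteriorAlgebra ℂ (HessI → ℂ) :=
  hE z * hE y - hE x * hE y + hE x * hE z

def uT0 : HessI → ℂ := hsg (.inr (0,0)) + hsg (.inr (1,2)) + hsg (.inr (2,1))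
def uT1 : HessI → ℂ := hsg (.inr (0,1)) + hsg (.inr (1,0)) + hsg (.inr (2,2))
def uT2 : HessI → ℂ := hsg (.inr (0,2)) + hsg (.inr (1,1)) + hsg (.inr (2,0))
def uG : HessI → ℂ := hsg (.inl 0) + hsg (.inl 1) + hsg (.inl 2)

def vv : Fin 3 → HessI → ℂ
  | 0 => uT0 - uG
  | 1 => uT1 - uG
  | 2 => uT2 - uG

lemma hess_zsum (g : ZMod 3 → ℂ) : ∑ x, g x = g 0 + g 1 + g 2 := by
  have : (Finset.univ : Finset (ZMod 3)) = {0,1,2} := by decide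
  rw [this, Finset.sum_insert (by decide), Finset.sum_insert (by decide),
    Finset.sum_singleton, add_assoc]

lemma hess_psum (g : ZMod 3 × ZMod 3 → ℂ) : ∑ p, g p =
    g (0,0) + g (0,1) + g (0,2) + (g (1,0) + g (1,1) + g (1,2)) +
      (g (2,0) + g (2,1) + g (2,2)) := by
  rw [Fintype.sum_prod_type, hess_zsum (fun i => ∑ j, g (i, j)),
    hess_zsum (fun j => g (0, j)), hess_zsum (fun j => g (1, j)),
    hess_zsum (fun j => g (2, j)), add_assoc, add_assoc]

lemma hess_isum (g : HessI → ℂ) : ∑ u, g u =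
    g (.inl 0) + g (.inl 1) + g (.inl 2) +
      (g (.inr (0,0)) + g (.inr (0,1)) + g (.inr (0,2)) +
        (g (.inr (1,0)) + g (.inr (1,1)) + g (.inr (1,2))) +
        (g (.inr (2,0)) + g (.inr (2,1)) + g (.inr (2,2)))) := by
  rw [Fintype.sum_sum_type, Fin.sum_univ_three, hess_psum (fun p => g (.inr p)), add_assoc]

lemma hess_ianti (x y : HessI → ℂ) :
    ExteriorAlgebra.ι ℂ y * ExteriorAlgebra.ι ℂ x =
      -(ExteriorAlgebra.ι ℂ x * ExteriorAlgebra.ι ℂ y) := by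
  have h := ExteriorAlgebra.ι_sq_zero (R := ℂ) (x + y)
  rw [map_add, add_mul, mul_add, mul_add, ExteriorAlgebra.ι_sq_zero,
    ExteriorAlgebra.ι_sq_zero, zero_add, add_zero] at h
  exact eq_neg_of_add_eq_zero_right h

lemma hess_pow_mod3 (ω : ℂ) (h3 : ω ^ 3 = 1) (a : ℕ) : ω ^ a = ω ^ (a % 3) := by
  conv_lhs => rw [← Nat.div_add_mod a 3]
  rw [pow_add, pow_mul, h3, one_pow, one_mul]

lemma hess_dep0 (ω : ℂ) (h3 : ω ^ 3 = 1) (hne : ω ≠ 0)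
    {F1 F2 F3 : (Fin 3 → ℂ) →ₗ[ℂ] ℂ} (a1 b1 a2 b2 : ℕ)
    (hF1 : F1 = (LinearMap.proj 0 : (Fin 3 → ℂ) →ₗ[ℂ] ℂ) +
      ω ^ a1 • LinearMap.proj 1 + ω ^ b1 • LinearMap.proj 2)
    (hF2 : F2 = (LinearMap.proj 0 : (Fin 3 → ℂ) →ₗ[ℂ] ℂ))
    (hF3 : F3 = (LinearMap.proj 0 : (Fin 3 → ℂ) →ₗ[ℂ] ℂ) +
      ω ^ a2 • LinearMap.proj 1 + ω ^ b2 • LinearMap.proj 2)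
    (hmod : (a2 + b1) % 3 = (a1 + b2) % 3) :
    ¬ LinearIndependent ℂ ![F1, F2, F3] := by
  rw [Fintype.not_linearIndependent_iff]
  refine ⟨![ω ^ a2, -(ω ^ a2 - ω ^ a1), -ω ^ a1], ?_, 0, by simpa using pow_ne_zero a2 hne⟩
  have hp : ω ^ a2 * ω ^ b1 = ω ^ a1 * ω ^ b2 := by
    rw [← pow_add, ← pow_add, hess_pow_mod3 ω h3 (a2 + b1), hess_pow_mod3 ω h3 (a1 + b2), hmod]
  rw [Fin.sum_univ_three]
  simp only [Matrix.cons_val_zero, Matrix.cons_val_one, Matrix.head_cons,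
    Matrix.cons_val_two, Matrix.tail_cons]
  refine LinearMap.ext fun x => ?_
  simp only [hF1, hF2, hF3, LinearMap.add_apply, LinearMap.smul_apply, LinearMap.proj_apply,
    LinearMap.zero_apply, smul_eq_mul]
  linear_combination (x 2) * hp

lemma hess_dep1 (ω : ℂ)
    {F1 F2 F3 : (Fin 3 → ℂ) →ₗ[ℂ] ℂ} (a1 a2 b : ℕ)
    (hF1 : F1 = (LinearMap.proj 0 : (Fin 3 → ℂ) →ₗ[ℂ] ℂ) +
      ω ^ a1 • LinearMap.proj 1 + ω ^ b • LinearMap.proj 2)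
    (hF2 : F2 = (LinearMap.proj 1 : (Fin 3 → ℂ) →ₗ[ℂ] ℂ))
    (hF3 : F3 = (LinearMap.proj 0 : (Fin 3 → ℂ) →ₗ[ℂ] ℂ) +
      ω ^ a2 • LinearMap.proj 1 + ω ^ b • LinearMap.proj 2) :
    ¬ LinearIndependent ℂ ![F1, F2, F3] := by
  rw [Fintype.not_linearIndependent_iff]
  refine ⟨![1, -(ω ^ a1 - ω ^ a2), -1], ?_, 0, by norm_num⟩
  rw [Fin.sum_univ_three]
  simp only [Matrix.cons_val_zero, Matrix.cons_val_one, Matrix.head_cons,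
    Matrix.cons_val_two, Matrix.tail_cons]
  refine LinearMap.ext fun x => ?_
  simp only [hF1, hF2, hF3, LinearMap.add_apply, LinearMap.smul_apply, LinearMap.proj_apply,
    LinearMap.zero_apply, smul_eq_mul]
  ring

lemma hess_dep2 (ω : ℂ)
    {F1 F2 F3 : (Fin 3 → ℂ) →ₗ[ℂ] ℂ} (a b1 b2 : ℕ)
    (hF1 : F1 = (LinearMap.proj 0 : (Fin 3 → ℂ) →ₗ[ℂ] ℂ) +
      ω ^ a • LinearMap.proj 1 + ω ^ b1 • LinearMap.proj 2)
    (hF2 : F2 = (LinearMap.proj 2 : (Fin 3 → ℂ) →ₗ[ℂ] ℂ))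
    (hF3 : F3 = (LinearMap.proj 0 : (Fin 3 → ℂ) →ₗ[ℂ] ℂ) +
      ω ^ a • LinearMap.proj 1 + ω ^ b2 • LinearMap.proj 2) :
    ¬ LinearIndependent ℂ ![F1, F2, F3] := by
  rw [Fintype.not_linearIndependent_iff]
  refine ⟨![1, -(ω ^ b1 - ω ^ b2), -1], ?_, 0, by norm_num⟩
  rw [Fin.sum_univ_three]
  simp only [Matrix.cons_val_zero, Matrix.cons_val_one, Matrix.head_cons,
    Matrix.cons_val_two, Matrix.tail_cons]
  refine LinearMap.ext fun x => ?_
  simp only [hF1, hF2, hF3, LinearMap.add_apply, LinearMap.smul_apply, LinearMap.proj_apply,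
    LinearMap.zero_apply, smul_eq_mul]
  ring

open ExteriorAlgebra in
lemma hess_key01 : ι ℂ (uT0 - uG) * ι ℂ (uT1 - uG) =
    -GEN (Sum.inr (0,0)) (Sum.inl 0) (Sum.inr (2,2)) - GEN (Sum.inr (1,2)) (Sum.inl 0) (Sum.inr (0,1)) - GEN (Sum.inr (2,1)) (Sum.inl 0) (Sum.inr (1,0)) - GEN (Sum.inr (0,0)) (Sum.inl 1) (Sum.inr (1,0)) - GEN (Sum.inr (2,1)) (Sum.inl 1) (Sum.inr (0,1)) - GEN (Sum.inr (1,2)) (Sum.inl 1) (Sum.inr (2,2)) - GEN (Sum.inr (0,0)) (Sum.inl 2) (Sum.inr (0,1)) - GEN (Sum.inr (1,2)) (Sum.inl 2) (Sum.inr (1,0)) - GEN (Sum.inr (2,1)) (Sum.inl 2) (Sum.inr (2,2)) := by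
  have hGG : ι ℂ uG * ι ℂ uG = 0 := ι_sq_zero uG
  rw [map_sub, map_sub, sub_mul, mul_sub, mul_sub, hGG]
  unfold uT0 uT1 uG GEN hE
  simp only [map_add, add_mul, mul_add]
  abel

open ExteriorAlgebra in
lemma hess_key02 : ι ℂ (uT0 - uG) * ι ℂ (uT2 - uG) =
    -GEN (Sum.inr (0,0)) (Sum.inl 0) (Sum.inr (1,1)) - GEN (Sum.inr (1,2)) (Sum.inl 0) (Sum.inr (2,0)) - GEN (Sum.inr (2,1)) (Sum.inl 0) (Sum.inr (0,2)) - GEN (Sum.inr (0,0)) (Sum.inl 1) (Sum.inr (2,0)) - GEN (Sum.inr (2,1)) (Sum.inl 1) (Sum.inr (1,1)) - GEN (Sum.inr (1,2)) (Sum.inl 1) (Sum.inr (0,2)) - GEN (Sum.inr (0,0)) (Sum.inl 2) (Sum.inr (0,2)) - GEN (Sum.inr (1,2)) (Sum.inl 2) (Sum.inr (1,1)) - GEN (Sum.inr (2,1)) (Sum.inl 2) (Sum.inr (2,0)) := by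
  have hGG : ι ℂ uG * ι ℂ uG = 0 := ι_sq_zero uG
  rw [map_sub, map_sub, sub_mul, mul_sub, mul_sub, hGG]
  unfold uT0 uT2 uG GEN hE
  simp only [map_add, add_mul, mul_add]
  abel

open ExteriorAlgebra in
lemma hess_key12 : ι ℂ (uT1 - uG) * ι ℂ (uT2 - uG) =
    -GEN (Sum.inr (2,2)) (Sum.inl 0) (Sum.inr (1,1)) - GEN (Sum.inr (0,1)) (Sum.inl 0) (Sum.inr (2,0)) - GEN (Sum.inr (1,0)) (Sum.inl 0) (Sum.inr (0,2)) - GEN (Sum.inr (1,0)) (Sum.inl 1) (Sum.inr (2,0)) - GEN (Sum.inr (0,1)) (Sum.inl 1) (Sum.inr (1,1)) - GEN (Sum.inr (2,2)) (Sum.inl 1) (Sum.inr (0,2)) - GEN (Sum.inr (0,1)) (Sum.inl 2) (Sum.inr (0,2)) - GEN (Sum.inr (1,0)) (Sum.inl 2) (Sum.inr (1,1)) - GEN (Sum.inr (2,2)) (Sum.inl 2) (Sum.inr (2,0)) := by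
  have hGG : ι ℂ uG * ι ℂ uG = 0 := ι_sq_zero uG
  rw [map_sub, map_sub, sub_mul, mul_sub, mul_sub, hGG]
  unfold uT1 uT2 uG GEN hE
  simp only [map_add, add_mul, mul_add]
  abel


set_option maxHeartbeats 2000000 in
/-- The Hessian arrangement of 12 lines in `ℂ³` has a three-dimensional non-local
component in the first cohomology support locus of its Orlik–Solomon algebra.
The index set is `Fin 3 ⊕ (ZMod 3 × ZMod 3)`: `Sum.inl i` corresponds to the
coordinate form `g_{i+1} = x_{i+1}` and `Sum.inr (i,j)` to
`h(i,j) = x₁ + ω^i x₂ + ω^j x₃`. -/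
theorem hessian_nonlocal_component
    (ω : ℂ) (hω : ω = Complex.exp (2 * Real.pi * Complex.I / 3))
    (f : (Fin 3 ⊕ ZMod 3 × ZMod 3) → ((Fin 3 → ℂ) →ₗ[ℂ] ℂ))
    (hfcoord : ∀ i : Fin 3,
      f (Sum.inl i) = (LinearMap.proj i : (Fin 3 → ℂ) →ₗ[ℂ] ℂ))
    (hfh : ∀ i j : ZMod 3,
      f (Sum.inr (i, j)) = (LinearMap.proj 0 : (Fin 3 → ℂ) →ₗ[ℂ] ℂ) +
        ω ^ i.val • LinearMap.proj 1 + ω ^ j.val • LinearMap.proj 2)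
    (S : Set (Fin 3 ⊕ ZMod 3 × ZMod 3 → ℂ))
    (hS : S = { lam |
      (∑ u : Fin 3 ⊕ ZMod 3 × ZMod 3, lam u) = 0 ∧
      ∀ c : ZMod 3,
        lam (Sum.inl 0) +
          (∑ p : ZMod 3 × ZMod 3, if p.2 - p.1 = c then lam (Sum.inr p) else 0) = 0 ∧
        lam (Sum.inl 1) +
          (∑ p : ZMod 3 × ZMod 3, if p.2 = c then lam (Sum.inr p) else 0) = 0 ∧
        lam (Sum.inl 2) +
          (∑ p : ZMod 3 × ZMod 3, if p.1 = c then lam (Sum.inr p) else 0) = 0 }) :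
    (∃ W : Submodule ℂ (Fin 3 ⊕ ZMod 3 × ZMod 3 → ℂ),
      (W : Set (Fin 3 ⊕ ZMod 3 × ZMod 3 → ℂ)) = S ∧ finrank ℂ W = 3) ∧
    S ⊆ osR1 f 1 := by
  have h3 : ω ^ 3 = 1 := by
    have h33 : ((3 : ℕ) : ℂ) * (2 * Real.pi * Complex.I / 3) = 2 * Real.pi * Complex.I := by
      push_cast; ring
    rw [hω, ← Complex.exp_nat_mul, h33, Complex.exp_two_pi_mul_I]
  have hne : ω ≠ 0 := by
    intro h0
    rw [h0] at h3
    norm_num at h3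
  subst hS
  -- every member of S is an explicit combination of `vv`
  have hSrep : ∀ lam : HessI → ℂ,
      ((∑ u : HessI, lam u) = 0 ∧
      ∀ c : ZMod 3,
        lam (Sum.inl 0) +
          (∑ p : ZMod 3 × ZMod 3, if p.2 - p.1 = c then lam (Sum.inr p) else 0) = 0 ∧
        lam (Sum.inl 1) +
          (∑ p : ZMod 3 × ZMod 3, if p.2 = c then lam (Sum.inr p) else 0) = 0 ∧
        lam (Sum.inl 2) +
          (∑ p : ZMod 3 × ZMod 3, if p.1 = c then lam (Sum.inr p) else 0) = 0) →
      lam = lam (Sum.inr (0,0)) • vv 0 + lam (Sum.inr (0,1)) • vv 1 +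
        lam (Sum.inr (0,2)) • vv 2 := by
    rintro lam ⟨hs, hflat⟩
    have hA0 := (hflat 0).1
    have hA1 := (hflat 1).1
    have hA2 := (hflat 2).1
    have hB0 := (hflat 0).2.1
    have hB1 := (hflat 1).2.1
    have hB2 := (hflat 2).2.1
    have hC0 := (hflat 0).2.2
    have hC1 := (hflat 1).2.2
    have hC2 := (hflat 2).2.2
    rw [hess_psum] at hA0 hA1 hA2 hB0 hB1 hB2 hC0 hC1 hC2
    simp (config := { decide := true }) only [if_true, if_false] at hA0 hA1 hA2 hB0 hB1 hB2 hC0 hC1 hC2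
    rw [hess_isum] at hs
    funext u
    have hval : ∀ w : HessI,
        (lam (Sum.inr (0,0)) • vv 0 + lam (Sum.inr (0,1)) • vv 1 +
          lam (Sum.inr (0,2)) • vv 2) w =
        lam (Sum.inr (0,0)) * vv 0 w + lam (Sum.inr (0,1)) * vv 1 w +
          lam (Sum.inr (0,2)) * vv 2 w := by
      intro w; simp [Pi.add_apply, Pi.smul_apply, smul_eq_mul]
    rcases u with k | ⟨i, j⟩
    · rcases hess_fin3_cases k with rfl | rfl | rfl
      · rw [hval]; simp (config := { decide := true }) [vv, uT0, uT1, uT2, uG, hsg, Pi.single_apply, -Prod.mk_zero_zero, -Prod.mk_one_one]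
        linear_combination (-1 : ℂ) * hs + (2/3 : ℂ) * hA0 + (2/3 : ℂ) * hA1 +
          (2/3 : ℂ) * hA2 + (1/3 : ℂ) * hB0 + (1/3 : ℂ) * hB1 + (1/3 : ℂ) * hB2 + hC0
      · rw [hval]; simp (config := { decide := true }) [vv, uT0, uT1, uT2, uG, hsg, Pi.single_apply, -Prod.mk_zero_zero, -Prod.mk_one_one]
        linear_combination (-1 : ℂ) * hs + (1/3 : ℂ) * hA0 + (1/3 : ℂ) * hA1 +
          (1/3 : ℂ) * hA2 + (2/3 : ℂ) * hB0 + (2/3 : ℂ) * hB1 + (2/3 : ℂ) * hB2 + hC0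
      · rw [hval]; simp (config := { decide := true }) [vv, uT0, uT1, uT2, uG, hsg, Pi.single_apply, -Prod.mk_zero_zero, -Prod.mk_one_one]
        linear_combination hC0
    · rw [hval]
      rcases hess_zmod3_cases i with rfl | rfl | rfl <;>
        rcases hess_zmod3_cases j with rfl | rfl | rfl
      · simp (config := { decide := true }) [vv, uT0, uT1, uT2, uG, hsg, Pi.single_apply, -Prod.mk_zero_zero, -Prod.mk_one_one]
      · simp (config := { decide := true }) [vv, uT0, uT1, uT2, uG, hsg, Pi.single_apply, -Prod.mk_zero_zero, -Prod.mk_one_one]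
      · simp (config := { decide := true }) [vv, uT0, uT1, uT2, uG, hsg, Pi.single_apply, -Prod.mk_zero_zero, -Prod.mk_one_one]
      · simp (config := { decide := true }) [vv, uT0, uT1, uT2, uG, hsg, Pi.single_apply, -Prod.mk_zero_zero, -Prod.mk_one_one]
        linear_combination (1/3 : ℂ) * hB0 + (-1/3 : ℂ) * hC0 + (-1/3 : ℂ) * hA1 +
          (-1/3 : ℂ) * hB1 + (1/3 : ℂ) * hC1 + (1/3 : ℂ) * hA2
      · simp (config := { decide := true }) [vv, uT0, uT1, uT2, uG, hsg, Pi.single_apply, -Prod.mk_zero_zero, -Prod.mk_one_one]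
        linear_combination (1/3 : ℂ) * hA0 + (-1/3 : ℂ) * hC0 + (1/3 : ℂ) * hB1 +
          (1/3 : ℂ) * hC1 + (-1/3 : ℂ) * hA2 + (-1/3 : ℂ) * hB2
      · simp (config := { decide := true }) [vv, uT0, uT1, uT2, uG, hsg, Pi.single_apply, -Prod.mk_zero_zero, -Prod.mk_one_one]
        linear_combination (-1/3 : ℂ) * hA0 + (-1/3 : ℂ) * hB0 + (-1/3 : ℂ) * hC0 +
          (1/3 : ℂ) * hA1 + (1/3 : ℂ) * hC1 + (1/3 : ℂ) * hB2
      · simp (config := { decide := true }) [vv, uT0, uT1, uT2, uG, hsg, Pi.single_apply, -Prod.mk_zero_zero, -Prod.mk_one_one]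
        linear_combination hs + (-1/3 : ℂ) * hA0 + (-2/3 : ℂ) * hC0 + (-1/3 : ℂ) * hB1 +
          (-1/3 : ℂ) * hC1 + (-2/3 : ℂ) * hA2 + (-2/3 : ℂ) * hB2
      · simp (config := { decide := true }) [vv, uT0, uT1, uT2, uG, hsg, Pi.single_apply, -Prod.mk_zero_zero, -Prod.mk_one_one]
        linear_combination hs + (-2/3 : ℂ) * hA0 + (-2/3 : ℂ) * hB0 + (-2/3 : ℂ) * hC0 +
          (-1/3 : ℂ) * hA1 + (-1/3 : ℂ) * hC1 + (-1/3 : ℂ) * hB2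
      · simp (config := { decide := true }) [vv, uT0, uT1, uT2, uG, hsg, Pi.single_apply, -Prod.mk_zero_zero, -Prod.mk_one_one]
        linear_combination hs + (-1/3 : ℂ) * hB0 + (-2/3 : ℂ) * hC0 + (-2/3 : ℂ) * hA1 +
          (-2/3 : ℂ) * hB1 + (-1/3 : ℂ) * hC1 + (-1/3 : ℂ) * hA2
  -- the nine products of basis vectors lie in the OS ideal
  have mem01 : ExteriorAlgebra.ι ℂ (uT0 - uG) * ExteriorAlgebra.ι ℂ (uT1 - uG) ∈ osI2 f := by
    rw [hess_key01]
    refine sub_mem (sub_mem (sub_mem (sub_mem (sub_mem (sub_mem (sub_mem (sub_mem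
      (neg_mem ?_) ?_) ?_) ?_) ?_) ?_) ?_) ?_) ?_
    · exact Submodule.subset_span ⟨_, _, _, by decide, by decide, by decide, hess_dep0 ω h3 hne 0 0 2 2 (hfh 0 0) (hfcoord 0) (hfh 2 2) (by norm_num), rfl⟩
    · exact Submodule.subset_span ⟨_, _, _, by decide, by decide, by decide, hess_dep0 ω h3 hne 1 2 0 1 (hfh 1 2) (hfcoord 0) (hfh 0 1) (by norm_num), rfl⟩
    · exact Submodule.subset_span ⟨_, _, _, by decide, by decide, by decide, hess_dep0 ω h3 hne 2 1 1 0 (hfh 2 1) (hfcoord 0) (hfh 1 0) (by norm_num), rfl⟩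
    · exact Submodule.subset_span ⟨_, _, _, by decide, by decide, by decide, hess_dep1 ω 0 1 0 (hfh 0 0) (hfcoord 1) (hfh 1 0), rfl⟩
    · exact Submodule.subset_span ⟨_, _, _, by decide, by decide, by decide, hess_dep1 ω 2 0 1 (hfh 2 1) (hfcoord 1) (hfh 0 1), rfl⟩
    · exact Submodule.subset_span ⟨_, _, _, by decide, by decide, by decide, hess_dep1 ω 1 2 2 (hfh 1 2) (hfcoord 1) (hfh 2 2), rfl⟩
    · exact Submodule.subset_span ⟨_, _, _, by decide, by decide, by decide, hess_dep2 ω 0 0 1 (hfh 0 0) (hfcoord 2) (hfh 0 1), rfl⟩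
    · exact Submodule.subset_span ⟨_, _, _, by decide, by decide, by decide, hess_dep2 ω 1 2 0 (hfh 1 2) (hfcoord 2) (hfh 1 0), rfl⟩
    · exact Submodule.subset_span ⟨_, _, _, by decide, by decide, by decide, hess_dep2 ω 2 1 2 (hfh 2 1) (hfcoord 2) (hfh 2 2), rfl⟩
  have mem02 : ExteriorAlgebra.ι ℂ (uT0 - uG) * ExteriorAlgebra.ι ℂ (uT2 - uG) ∈ osI2 f := by
    rw [hess_key02]
    refine sub_mem (sub_mem (sub_mem (sub_mem (sub_mem (sub_mem (sub_mem (sub_mem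
      (neg_mem ?_) ?_) ?_) ?_) ?_) ?_) ?_) ?_) ?_
    · exact Submodule.subset_span ⟨_, _, _, by decide, by decide, by decide, hess_dep0 ω h3 hne 0 0 1 1 (hfh 0 0) (hfcoord 0) (hfh 1 1) (by norm_num), rfl⟩
    · exact Submodule.subset_span ⟨_, _, _, by decide, by decide, by decide, hess_dep0 ω h3 hne 1 2 2 0 (hfh 1 2) (hfcoord 0) (hfh 2 0) (by norm_num), rfl⟩
    · exact Submodule.subset_span ⟨_, _, _, by decide, by decide, by decide, hess_dep0 ω h3 hne 2 1 0 2 (hfh 2 1) (hfcoord 0) (hfh 0 2) (by norm_num), rfl⟩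
    · exact Submodule.subset_span ⟨_, _, _, by decide, by decide, by decide, hess_dep1 ω 0 2 0 (hfh 0 0) (hfcoord 1) (hfh 2 0), rfl⟩
    · exact Submodule.subset_span ⟨_, _, _, by decide, by decide, by decide, hess_dep1 ω 2 1 1 (hfh 2 1) (hfcoord 1) (hfh 1 1), rfl⟩
    · exact Submodule.subset_span ⟨_, _, _, by decide, by decide, by decide, hess_dep1 ω 1 0 2 (hfh 1 2) (hfcoord 1) (hfh 0 2), rfl⟩
    · exact Submodule.subset_span ⟨_, _, _, by decide, by decide, by decide, hess_dep2 ω 0 0 2 (hfh 0 0) (hfcoord 2) (hfh 0 2), rfl⟩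
    · exact Submodule.subset_span ⟨_, _, _, by decide, by decide, by decide, hess_dep2 ω 1 2 1 (hfh 1 2) (hfcoord 2) (hfh 1 1), rfl⟩
    · exact Submodule.subset_span ⟨_, _, _, by decide, by decide, by decide, hess_dep2 ω 2 1 0 (hfh 2 1) (hfcoord 2) (hfh 2 0), rfl⟩
  have mem12 : ExteriorAlgebra.ι ℂ (uT1 - uG) * ExteriorAlgebra.ι ℂ (uT2 - uG) ∈ osI2 f := by
    rw [hess_key12]
    refine sub_mem (sub_mem (sub_mem (sub_mem (sub_mem (sub_mem (sub_mem (sub_mem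
      (neg_mem ?_) ?_) ?_) ?_) ?_) ?_) ?_) ?_) ?_
    · exact Submodule.subset_span ⟨_, _, _, by decide, by decide, by decide, hess_dep0 ω h3 hne 2 2 1 1 (hfh 2 2) (hfcoord 0) (hfh 1 1) (by norm_num), rfl⟩
    · exact Submodule.subset_span ⟨_, _, _, by decide, by decide, by decide, hess_dep0 ω h3 hne 0 1 2 0 (hfh 0 1) (hfcoord 0) (hfh 2 0) (by norm_num), rfl⟩
    · exact Submodule.subset_span ⟨_, _, _, by decide, by decide, by decide, hess_dep0 ω h3 hne 1 0 0 2 (hfh 1 0) (hfcoord 0) (hfh 0 2) (by norm_num), rfl⟩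
    · exact Submodule.subset_span ⟨_, _, _, by decide, by decide, by decide, hess_dep1 ω 1 2 0 (hfh 1 0) (hfcoord 1) (hfh 2 0), rfl⟩
    · exact Submodule.subset_span ⟨_, _, _, by decide, by decide, by decide, hess_dep1 ω 0 1 1 (hfh 0 1) (hfcoord 1) (hfh 1 1), rfl⟩
    · exact Submodule.subset_span ⟨_, _, _, by decide, by decide, by decide, hess_dep1 ω 2 0 2 (hfh 2 2) (hfcoord 1) (hfh 0 2), rfl⟩
    · exact Submodule.subset_span ⟨_, _, _, by decide, by decide, by decide, hess_dep2 ω 0 1 2 (hfh 0 1) (hfcoord 2) (hfh 0 2), rfl⟩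
    · exact Submodule.subset_span ⟨_, _, _, by decide, by decide, by decide, hess_dep2 ω 1 0 1 (hfh 1 0) (hfcoord 2) (hfh 1 1), rfl⟩
    · exact Submodule.subset_span ⟨_, _, _, by decide, by decide, by decide, hess_dep2 ω 2 2 0 (hfh 2 2) (hfcoord 2) (hfh 2 0), rfl⟩
  have hmemv : ∀ a b : Fin 3,
      ExteriorAlgebra.ι ℂ (vv a) * ExteriorAlgebra.ι ℂ (vv b) ∈ osI2 f := by
    intro a b
    rcases hess_fin3_cases a with rfl | rfl | rfl <;>
      rcases hess_fin3_cases b with rfl | rfl | rfl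
    · rw [ExteriorAlgebra.ι_sq_zero]; exact zero_mem _
    · exact mem01
    · exact mem02
    · rw [hess_ianti]; exact neg_mem mem01
    · rw [ExteriorAlgebra.ι_sq_zero]; exact zero_mem _
    · exact mem12
    · rw [hess_ianti]; exact neg_mem mem02
    · rw [hess_ianti]; exact neg_mem mem12
    · rw [ExteriorAlgebra.ι_sq_zero]; exact zero_mem _
  set W : Submodule ℂ (HessI → ℂ) := Submodule.span ℂ (Set.range vv) with hW
  have hli : LinearIndependent ℂ vv := by
    rw [Fintype.linearIndependent_iff]
    intro g hg
    rw [Fin.sum_univ_three] at hg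
    have h0 := congrFun hg (Sum.inr (0,0))
    have h1 := congrFun hg (Sum.inr (0,1))
    have h2 := congrFun hg (Sum.inr (0,2))
    simp (config := { decide := true }) [vv, uT0, uT1, uT2, uG, hsg, Pi.single_apply, -Prod.mk_zero_zero, -Prod.mk_one_one] at h0 h1 h2
    intro i
    rcases hess_fin3_cases i with rfl | rfl | rfl
    · exact h0
    · exact h1
    · exact h2
  have hfinW : finrank ℂ W = 3 := by
    rw [hW, finrank_span_eq_card hli, Fintype.card_fin]
  have hKle : ∀ lam : HessI → ℂ,
      lam ∈ ({ lam : HessI → ℂ |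
      (∑ u : HessI, lam u) = 0 ∧
      ∀ c : ZMod 3,
        lam (Sum.inl 0) +
          (∑ p : ZMod 3 × ZMod 3, if p.2 - p.1 = c then lam (Sum.inr p) else 0) = 0 ∧
        lam (Sum.inl 1) +
          (∑ p : ZMod 3 × ZMod 3, if p.2 = c then lam (Sum.inr p) else 0) = 0 ∧
        lam (Sum.inl 2) +
          (∑ p : ZMod 3 × ZMod 3, if p.1 = c then lam (Sum.inr p) else 0) = 0 }) →
      W ≤ osK f lam := by
    intro lam hlam
    rw [Submodule.span_le]
    rintro x ⟨b, rfl⟩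
    show vv b ∈ osK f lam
    simp only [osK, Submodule.mem_comap, LinearMap.coe_comp, Function.comp_apply,
      LinearMap.mulLeft_apply]
    rw [hSrep lam hlam, map_add, map_add, map_smul, map_smul, map_smul, add_mul, add_mul,
      smul_mul_assoc, smul_mul_assoc, smul_mul_assoc]
    exact add_mem (add_mem (Submodule.smul_mem _ _ (hmemv 0 b))
      (Submodule.smul_mem _ _ (hmemv 1 b))) (Submodule.smul_mem _ _ (hmemv 2 b))
  constructor
  · refine ⟨W, ?_, hfinW⟩
    ext lam
    simp only [SetLike.mem_coe, Set.mem_setOf_eq]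
    constructor
    · intro hlam
      obtain ⟨c, rfl⟩ := (Submodule.mem_span_range_iff_exists_fun ℂ).mp hlam
      rw [Fin.sum_univ_three]
      constructor
      · rw [hess_isum]
        simp (config := { decide := true }) [Pi.add_apply, Pi.smul_apply, Pi.sub_apply,
          smul_eq_mul, vv, uT0, uT1, uT2, uG, hsg, Pi.single_apply,
          -Prod.mk_zero_zero, -Prod.mk_one_one]
        try ring
      · intro cc
        rcases hess_zmod3_cases cc with rfl | rfl | rfl <;>
          refine ⟨?_, ?_, ?_⟩ <;>
          (rw [hess_psum]
           simp (config := { decide := true }) [Pi.add_apply, Pi.smul_apply, Pi.sub_apply,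
             smul_eq_mul, vv, uT0, uT1, uT2, uG, hsg, Pi.single_apply, if_true, if_false,
             -Prod.mk_zero_zero, -Prod.mk_one_one]
           try ring)
    · intro hlam
      rw [hW, Submodule.mem_span_range_iff_exists_fun ℂ]
      exact ⟨![lam (Sum.inr (0,0)), lam (Sum.inr (0,1)), lam (Sum.inr (0,2))], by
        rw [Fin.sum_univ_three]
        simp only [Matrix.cons_val_zero, Matrix.cons_val_one, Matrix.head_cons,
          Matrix.cons_val_two, Matrix.tail_cons]
        exact (hSrep lam hlam).symm⟩
  · intro lam hlam
    have h3le : 3 ≤ finrank ℂ (osK f lam) := by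
      have hm := Submodule.finrank_mono (hKle lam hlam)
      rw [hfinW] at hm
      exact hm
    show lam ∈ osR1 f 1
    simp only [osR1, Set.mem_setOf_eq]
    rcases eq_or_ne lam 0 with rfl | hl
    · rw [if_pos rfl]
      omega
    · rw [if_neg hl]
      omega
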